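/- For every positive integer k and every real x > 0, the k-th derivative of x^k F(x) equals k! ∫_0^∞ e^{-t} t^k/(t+x)^{k+1} dt; in particular it is strictly positive. -/

import Mathlib

noncomputable def F (x : ℝ) : ℝ := ∫ t in Set.Ioi (0:ℝ), Real.exp (-t) / (t + x)

open MeasureTheory Set Real Filter Topology

lemma integrable_base (j : ℕ) :
    IntegrableOn (fun t : ℝ => Real.exp (-t) * t ^ j) (Set.Ioi 0) := by
  have h := Real.GammaIntegral_convergent (s := (j + 1 : ℝ)) (by positivity)
  refine h.congr_fun (fun t ht => ?_) measurableSet_Ioi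
  rw [add_sub_cancel_right]; simp only [Real.rpow_natCast]

noncomputable def G (k m : ℕ) (x : ℝ) : ℝ :=
  ∫ t in Set.Ioi (0:ℝ), Real.exp (-t) * t ^ k / (t + x) ^ m

lemma int_G (k m : ℕ) {x : ℝ} (hx : 0 < x) :
    IntegrableOn (fun t : ℝ => Real.exp (-t) * t ^ k / (t + x) ^ m) (Set.Ioi 0) := by
  have hmeas : AEStronglyMeasurable (fun t : ℝ => Real.exp (-t) * t ^ k / (t + x) ^ m)
      (volume.restrict (Set.Ioi 0)) := by
    apply ContinuousOn.aestronglyMeasurable ?_ measurableSet_Ioi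
    apply ContinuousOn.div ((continuous_neg.rexp.mul (continuous_pow k)).continuousOn)
      ((continuous_id.add continuous_const).pow m).continuousOn
    intro t ht
    have ht' : (0:ℝ) < t := ht
    exact pow_ne_zero _ (by positivity : (0:ℝ) < t + x).ne'
  refine Integrable.mono' ((integrable_base k).const_mul ((x ^ m)⁻¹)) hmeas ?_
  filter_upwards [ae_restrict_mem measurableSet_Ioi] with t ht
  have ht' : (0:ℝ) < t := ht
  have htx : (0:ℝ) < t + x := by positivity
  rw [Real.norm_eq_abs, abs_of_nonneg (by positivity)]
  rw [div_eq_mul_inv, mul_comm ((x^m)⁻¹)]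
  gcongr
  linarith


lemma hasDerivAt_G (k m : ℕ) (hm : 1 ≤ m) {x : ℝ} (hx : 0 < x) :
    HasDerivAt (G k m) (-(m:ℝ) * G k (m+1) x) x := by
  obtain ⟨m', rfl⟩ := Nat.exists_eq_add_of_le hm
  have hball : ∀ y ∈ Metric.ball x (x/2), x/2 < y := by
    intro y hy
    rw [Metric.mem_ball, Real.dist_eq, abs_lt] at hy
    linarith [hy.1]
  have key := hasDerivAt_integral_of_dominated_loc_of_deriv_le
    (F := fun y t => Real.exp (-t) * t ^ k / (t + y) ^ (1+m'))
    (F' := fun y t => -((1+m':ℕ):ℝ) * (Real.exp (-t) * t ^ k / (t + y) ^ (1+m'+1)))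
    (x₀ := x) (s := Metric.ball x (x/2)) (μ := volume.restrict (Set.Ioi 0))
    (bound := fun t => ((1+m':ℕ):ℝ) * (Real.exp (-t) * t ^ k / (x/2) ^ (1+m'+1)))
    (Metric.ball_mem_nhds x (by positivity))
    ?_ (int_G k (1+m') hx) ?_ ?_ ?_ ?_
  · have h2 : (∫ t in Set.Ioi (0:ℝ), -((1+m':ℕ):ℝ) * (Real.exp (-t) * t ^ k / (t + x) ^ (1+m'+1)))
        = -((1+m':ℕ):ℝ) * G k (1+m'+1) x := integral_const_mul _ _
    rw [h2] at key
    exact key.2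
  · filter_upwards [eventually_gt_nhds (by linarith : (0:ℝ) < x)] with y hy
    exact (int_G k (1+m') hy).aestronglyMeasurable
  · exact ((int_G k (1+m'+1) hx).const_mul _).aestronglyMeasurable
  · filter_upwards [ae_restrict_mem measurableSet_Ioi] with t ht
    intro y hy
    have ht' : (0:ℝ) < t := ht
    have hy' : x/2 < y := hball y hy
    have hty : (0:ℝ) < t + y := by linarith
    have hnorm : ‖-((1+m':ℕ):ℝ) * (Real.exp (-t) * t ^ k / (t + y) ^ (1+m'+1))‖
        = ((1+m':ℕ):ℝ) * (Real.exp (-t) * t ^ k / (t + y) ^ (1+m'+1)) := by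
      rw [norm_mul, Real.norm_eq_abs, Real.norm_eq_abs, abs_neg,
        abs_of_nonneg (by positivity), abs_of_nonneg (by positivity)]
    rw [hnorm]
    gcongr
    linarith
  · exact ((integrable_base k).const_mul (((1+m':ℕ):ℝ) / (x/2) ^ (1+m'+1))).congr
      (ae_of_all _ fun t => by ring)
  · filter_upwards [ae_restrict_mem measurableSet_Ioi] with t ht
    intro y hy
    have ht' : (0:ℝ) < t := ht
    have hy' : x/2 < y := hball y hy
    have hty : (0:ℝ) < t + y := by linarith
    have h1 : HasDerivAt (fun y : ℝ => (t + y) ^ (1+m')) (((1+m':ℕ):ℝ) * (t + y) ^ ((1+m') - 1) * 1) y :=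
      (((hasDerivAt_id y).const_add t).pow (1+m'))
    have h2 := (h1.inv (pow_ne_zero _ hty.ne')).const_mul (Real.exp (-t) * t ^ k)
    have h3 : (fun y : ℝ => Real.exp (-t) * t ^ k / (t + y) ^ (1+m'))
        = (fun y : ℝ => Real.exp (-t) * t ^ k * ((t + y) ^ (1+m'))⁻¹) := by
      funext z; rw [div_eq_mul_inv]
    rw [h3]
    refine h2.congr_deriv ?_
    rw [show (1 + m') - 1 = m' by omega]
    field_simp
    ring

lemma poly_iteratedDeriv (p : Polynomial ℝ) (n : ℕ) :
    iteratedDeriv n (fun y : ℝ => p.eval y) =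
      fun y : ℝ => ((Polynomial.derivative)^[n] p).eval y := by
  induction n generalizing p with
  | zero => simp
  | succ n ih =>
    rw [iteratedDeriv_succ', show deriv (fun y : ℝ => p.eval y)
        = fun y : ℝ => (Polynomial.derivative p).eval y from funext fun y => Polynomial.deriv p,
      ih, Function.iterate_succ_apply]

lemma main_iter (k : ℕ) (p : Polynomial ℝ) (n : ℕ) :
    ∀ x : ℝ, 0 < x →
    iteratedDeriv n (fun y => p.eval y + (-1:ℝ)^k * G k 1 y) x
      = ((Polynomial.derivative)^[n] p).eval x
        + (-1:ℝ)^k * ((-1:ℝ)^n * (Nat.factorial n) * G k (1+n) x) := by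
  induction n with
  | zero => intro x hx; simp
  | succ n ih =>
    intro x hx
    rw [iteratedDeriv_succ]
    have heq : iteratedDeriv n (fun y => p.eval y + (-1:ℝ)^k * G k 1 y)
        =ᶠ[𝓝 x] fun y => ((Polynomial.derivative)^[n] p).eval y
          + (-1:ℝ)^k * ((-1:ℝ)^n * (Nat.factorial n) * G k (1+n) y) := by
      filter_upwards [isOpen_Ioi.mem_nhds (show x ∈ Set.Ioi (0:ℝ) from hx)] with y hy
      exact ih y hy
    rw [heq.deriv_eq]
    have hG := hasDerivAt_G k (1+n) (by omega) hx
    have hD := (Polynomial.hasDerivAt ((Polynomial.derivative)^[n] p) x).add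
      (((hG.const_mul ((-1:ℝ)^n * (Nat.factorial n))).const_mul ((-1:ℝ)^k)))
    rw [HasDerivAt.deriv (f := fun y => Polynomial.eval y ((⇑Polynomial.derivative)^[n] p) + (-1:ℝ) ^ k * ((-1:ℝ) ^ n * ↑n.factorial * G k (1 + n) y)) hD]
    rw [Function.iterate_succ_apply']
    congr 1
    rw [show 1 + (n+1) = (1+n)+1 by omega]
    push_cast [Nat.factorial_succ, pow_succ]
    ring

noncomputable def M (j : ℕ) : ℝ := ∫ t in Set.Ioi (0:ℝ), Real.exp (-t) * t ^ j

noncomputable def P (k : ℕ) : Polynomial ℝ :=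
  ∑ i ∈ Finset.range k, Polynomial.C ((-1:ℝ)^(k-1-i) * M (k-1-i)) * Polynomial.X ^ i

lemma P_degree {k : ℕ} (hk : 1 ≤ k) : (P k).natDegree < k := by
  have : (P k).natDegree ≤ k - 1 := by
    apply Polynomial.natDegree_sum_le_of_forall_le
    intro i hi
    exact le_trans (Polynomial.natDegree_C_mul_X_pow_le _ _) (by
      have := Finset.mem_range.mp hi; omega)
  omega

lemma decomp (k : ℕ) {y : ℝ} (hy : 0 < y) :
    y ^ k * F y = (P k).eval y + (-1:ℝ)^k * G k 1 y := by
  have h1 : y ^ k * F y = ∫ t in Set.Ioi (0:ℝ), y ^ k * (Real.exp (-t) / (t + y)) :=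
    (integral_const_mul _ _).symm
  have h2 : Set.EqOn (fun t : ℝ => y ^ k * (Real.exp (-t) / (t + y)))
      (fun t : ℝ => (∑ i ∈ Finset.range k,
          (((-1:ℝ)^(k-1-i)) * y^i) * (Real.exp (-t) * t^(k-1-i)))
        + (-1:ℝ)^k * (Real.exp (-t) * t^k / (t + y)^1)) (Set.Ioi 0) := by
    intro t ht
    have ht' : (0:ℝ) < t := ht
    have hty : (0:ℝ) < t + y := by linarith
    have hgeom := geom_sum₂_mul y (-t) k
    set S := ∑ i ∈ Finset.range k, y^i * (-t)^(k-1-i) with hS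
    have hyk : y ^ k = S * (t + y) + (-t)^k := by
      have h' : S * (y - -t) = S * (t + y) := by ring
      rw [h'] at hgeom; linarith
    have hsum : (∑ i ∈ Finset.range k,
        (((-1:ℝ)^(k-1-i)) * y^i) * (Real.exp (-t) * t^(k-1-i))) = S * Real.exp (-t) := by
      rw [hS, Finset.sum_mul]
      refine Finset.sum_congr rfl fun i _ => ?_
      rw [neg_pow]; ring
    simp only
    rw [hsum, hyk, pow_one, neg_pow t k]
    field_simp
  rw [h1, setIntegral_congr_fun measurableSet_Ioi h2]
  have hint1 : IntegrableOn (fun t : ℝ => ∑ i ∈ Finset.range k,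
      (((-1:ℝ)^(k-1-i)) * y^i) * (Real.exp (-t) * t^(k-1-i))) (Set.Ioi 0) :=
    integrable_finset_sum _ fun i _ => (integrable_base _).const_mul _
  have hint2 : IntegrableOn (fun t : ℝ =>
      (-1:ℝ)^k * (Real.exp (-t) * t^k / (t + y)^1)) (Set.Ioi 0) :=
    (int_G k 1 hy).const_mul _
  rw [integral_add hint1 hint2,
    integral_finset_sum _ (fun i _ => (integrable_base _).const_mul _)]
  congr 1
  · rw [P, Polynomial.eval_finset_sum]
    refine Finset.sum_congr rfl fun i _ => ?_
    rw [integral_const_mul]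
    simp [M]
    ring
  · rw [integral_const_mul]
    rfl

theorem stmt_4 (k : ℕ) (hk : 1 ≤ k) (x : ℝ) (hx : 0 < x) :
    iteratedDeriv k (fun y => y ^ k * F y) x =
      (Nat.factorial k) * ∫ t in Set.Ioi (0:ℝ), Real.exp (-t) * t ^ k / (t + x) ^ (k + 1) ∧
    0 < iteratedDeriv k (fun y => y ^ k * F y) x := by
  have hGdef : G k (k+1) x = ∫ t in Set.Ioi (0:ℝ), Real.exp (-t) * t ^ k / (t + x) ^ (k + 1) := rfl
  have hiter : iteratedDeriv k (fun y => y ^ k * F y) x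
      = (Nat.factorial k) * G k (k+1) x := by
    have heq : (fun y => y ^ k * F y) =ᶠ[𝓝 x]
        (fun y => (P k).eval y + (-1:ℝ)^k * G k 1 y) := by
      filter_upwards [isOpen_Ioi.mem_nhds (show x ∈ Set.Ioi (0:ℝ) from hx)] with y hy
      exact decomp k hy
    rw [heq.iteratedDeriv_eq k, main_iter k (P k) k x hx,
      Polynomial.iterate_derivative_eq_zero (P_degree hk)]
    have hone : (-1:ℝ)^k * (-1:ℝ)^k = 1 := by
      rw [← pow_add]; exact Even.neg_one_pow ⟨k, rfl⟩
    rw [show 1 + k = k + 1 by omega]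
    simp only [Polynomial.eval_zero, zero_add]
    rw [← mul_assoc, ← mul_assoc, hone, one_mul]
  have hI : 0 < G k (k+1) x := by
    rw [hGdef]
    have hnn : 0 ≤ᵐ[volume.restrict (Set.Ioi 0)]
        fun t : ℝ => Real.exp (-t) * t ^ k / (t + x) ^ (k + 1) := by
      filter_upwards [ae_restrict_mem measurableSet_Ioi] with t ht
      have ht' : (0:ℝ) < t := ht
      positivity
    rw [setIntegral_pos_iff_support_of_nonneg_ae hnn (int_G k (k+1) hx)]
    refine lt_of_lt_of_le ?_ (measure_mono (show Set.Ioi (0:ℝ) ⊆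
        Function.support (fun t : ℝ => Real.exp (-t) * t ^ k / (t + x) ^ (k + 1)) ∩ Set.Ioi 0
      from fun t ht => ⟨by
        have ht' : (0:ℝ) < t := ht
        have : (0:ℝ) < Real.exp (-t) * t ^ k / (t + x) ^ (k + 1) := by positivity
        exact this.ne', ht⟩))
    simp [Real.volume_Ioi]
  constructor
  · rw [hiter, hGdef]
  · rw [hiter]
    have : (0:ℝ) < (Nat.factorial k : ℝ) := by positivity
    exact mul_pos this hI
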